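/- arXiv:1905.06449 — 2 statements merged into one kernel-verified Lean document; each statement's English description precedes it below -/
import Mathlib

section
/- Let π ≥ 0, L, U, K, D be real numbers with π < L < U, K ≥ 6, and D > 0, define the generation pricing function p(y) = π + ((L − π)/K)·(K·(U − π)/(L − π))^{y/D} and α = ln(K·(U−π)/(L−π)). Then for every real y and every real μ with 0 ≤ μ ≤ π, the inequality p(y) − μ ≥ (1/α)·D·p'(y) holds, where p'(y) denotes the derivative of p at y. -/
/-- Differential Allocation-Payment Relationship for the generation pricing
function `p(y) = π + ((L−π)/K)·(K·(U−π)/(L−π))^(y/D)` with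
`α = ln(K·(U−π)/(L−π))`: for every `y` and every marginal cost value
`μ ∈ [0, π]`, `p(y) − μ ≥ (1/α)·D·p'(y)`. -/
theorem stmt_7 (π L U K D : ℝ) (hπ : 0 ≤ π) (hπL : π < L) (hLU : L < U)
    (hK : 6 ≤ K) (hD : 0 < D) :
    ∀ y μ : ℝ, 0 ≤ μ → μ ≤ π →
      (π + ((L - π) / K) * (K * (U - π) / (L - π)) ^ (y / D)) - μ
        ≥ (1 / Real.log (K * (U - π) / (L - π))) * D
            * deriv (fun y : ℝ =>
                π + ((L - π) / K) * (K * (U - π) / (L - π)) ^ (y / D)) y := by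
  intro y μ hμ0 hμπ
  set b : ℝ := K * (U - π) / (L - π) with hbdef
  set c : ℝ := (L - π) / K with hcdef
  have hL : 0 < L - π := by linarith
  have hb1 : 1 < b := by
    rw [hbdef, lt_div_iff₀ hL]
    nlinarith
  have hb0 : 0 < b := lt_trans one_pos hb1
  have hlogb : 0 < Real.log b := Real.log_pos hb1
  have hc : 0 < c := div_pos hL (by linarith)
  have h1 : HasDerivAt (fun t : ℝ => t / D) (1 / D) y := by
    simpa using (hasDerivAt_id y).div_const D
  have h2 : HasDerivAt (fun t : ℝ => b ^ t) (b ^ (y / D) * Real.log b) (y / D) :=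
    (Real.hasStrictDerivAt_const_rpow hb0 (y / D)).hasDerivAt
  have h3 : HasDerivAt (fun t : ℝ => π + c * b ^ (t / D))
      (c * (b ^ (y / D) * Real.log b * (1 / D))) y := by
    have := (hasDerivAt_const y π).add (((h2.comp y h1)).const_mul c)
    simpa [Function.comp, Pi.add_def] using this
  rw [h3.deriv]
  have key : 1 / Real.log b * D * (c * (b ^ (y / D) * Real.log b * (1 / D)))
      = c * b ^ (y / D) := by
    field_simp
  rw [key]
  nlinarith [Real.rpow_pos_of_pos hb0 (y / D)]
end

section
/- Let π ≥ 0, L, U, K, G be real numbers with π < L < U, K ≥ 6, G > 0, and let 0 ≤ s̲ ≤ s̄ be lower and upper solar forecast bounds. Define the conservative generation pricing function p(y) = π + ((L − π)/K)·(K·(U − π)/(L − π))^{y/(s̲+G)} and α₂ = ((s̄ + G)/(s̲ + G))·ln(K·(U−π)/(L−π)). Then for every real y, every actual solar value s with s̲ ≤ s ≤ s̄, and every real μ with 0 ≤ μ ≤ π, the inequality p(y) − μ ≥ (1/α₂)·(s + G)·p'(y) holds, where p'(y) denotes the derivative of p at y. -/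
/-- Differential Allocation-Payment Relationship for the conservative generation
pricing function `p(y) = π + ((L−π)/K)·(K·(U−π)/(L−π))^(y/(s̲+G))` with
`α₂ = ((s̄+G)/(s̲+G))·ln(K·(U−π)/(L−π))`: for every `y`, every actual solar
value `s ∈ [s̲, s̄]`, and every marginal cost value `μ ∈ [0, π]`,
`p(y) − μ ≥ (1/α₂)·(s+G)·p'(y)`. -/
theorem stmt_12 (π L U K G slo shi : ℝ) (hπ : 0 ≤ π) (hπL : π < L) (hLU : L < U)
    (hK : 6 ≤ K) (hG : 0 < G) (hslo : 0 ≤ slo) (hs : slo ≤ shi) :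
    ∀ y s μ : ℝ, slo ≤ s → s ≤ shi → 0 ≤ μ → μ ≤ π →
      (π + ((L - π) / K) * (K * (U - π) / (L - π)) ^ (y / (slo + G))) - μ
        ≥ (1 / (((shi + G) / (slo + G)) * Real.log (K * (U - π) / (L - π))))
            * (s + G)
            * deriv (fun y : ℝ =>
                π + ((L - π) / K) * (K * (U - π) / (L - π)) ^ (y / (slo + G))) y := by
  intro y s μ hs1 hs2 hμ0 hμπ
  set a : ℝ := slo + G with ha
  have ha0 : 0 < a := by positivity
  set b : ℝ := K * (U - π) / (L - π) with hb
  have hLπ : 0 < L - π := by linarith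
  have hK0 : 0 < K := by linarith
  have hb1 : 1 < b := by
    rw [hb, lt_div_iff₀ hLπ]
    nlinarith
  have hb0 : 0 < b := by linarith
  have hlogb : 0 < Real.log b := Real.log_pos hb1
  set c : ℝ := (L - π) / K with hc
  have hc0 : 0 < c := by positivity
  set B : ℝ := b ^ (y / a) with hB
  have hB0 : 0 < B := Real.rpow_pos_of_pos hb0 _
  -- derivative computation
  have hder : HasDerivAt (fun y : ℝ => π + c * b ^ (y / a))
      (c * (b ^ (y / a) * Real.log b * (1 / a))) y := by
    have h1 : HasDerivAt (fun y : ℝ => y / a) (1 / a) y := by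
      simpa using (hasDerivAt_id y).div_const a
    have h2 : HasDerivAt (fun x : ℝ => b ^ x) (b ^ (y / a) * Real.log b) (y / a) :=
      (Real.hasStrictDerivAt_const_rpow hb0 (y / a)).hasDerivAt
    have h3 := (h2.comp y h1).const_mul c
    simpa [mul_assoc] using h3.const_add π
  have hderiv : deriv (fun y : ℝ =>
      π + ((L - π) / K) * (K * (U - π) / (L - π)) ^ (y / (slo + G))) y
      = c * (B * Real.log b * (1 / a)) := hder.deriv
  rw [hderiv]
  have hshi : 0 < shi + G := by linarith
  have hsG : 0 < s + G := by linarith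
  have key : (1 / (((shi + G) / a) * Real.log b)) * (s + G) * (c * (B * Real.log b * (1 / a)))
      = ((s + G) / (shi + G)) * (c * B) := by
    field_simp
  rw [key]
  have h1 : ((s + G) / (shi + G)) * (c * B) ≤ 1 * (c * B) := by
    apply mul_le_mul_of_nonneg_right _ (by positivity)
    rw [div_le_one hshi]; linarith
  nlinarith
end
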